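/- Let $G$ be a group, $H \le G$ a subgroup, and let $A$, $B$ be commutative complex $G$-$*$-algebras with $A$ proper over $G/H$ (i.e., $A$ carries a full compatible $(G,\mathbb{C}^{(G/H)})$-algebra structure). Suppose $B$ carries a full compatible $(G,A)$-algebra structure, and suppose each $A_x = \chi_x \cdot A$ admits a bounded approximate unit in the purely algebraic sense that for every finite set $a_1,\dots,a_n \in A_x$ and $b \in B$ with $b = \sum a_i \cdot b_i$, there exist elements $e_\lambda \in A_x$ with $e_\lambda b \to b$ (e.g., $A$ a bornolocal $C^*$-algebra and $B$ normed with $\|c \cdot b\| \le \|c\|\,\|b\|$). Then, setting $B_x = A_x \cdot B$, one has $B_x \cap B_y = 0$ for $x \neq y$, $B = \bigoplus_x B_x$, and the action $(\sum_x \lambda_x \chi_x)\cdot(\sum_x b_x) = \sum_x \lambda_x b_x$ defines a full compatible $(G, \mathbb{C}^{(G/H)})$-algebra structure on $B$; hence $B$ is proper over $G/H$. -/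

import Mathlib

open Finsupp

/-- Lemma `iprop-jprop`: let `G` be a group, `H ≤ G`, and let `A`, `B` be
commutative complex `G`-`*`-algebras, with `A` proper over `G/H` (i.e. `A` carries a full
compatible `(G, ℂ^(G/H))`-structure `dotJA`, where `ℂ^(G/H) = (G⧸H) →₀ ℂ`), and with `B`
carrying a full compatible `(G, A)`-structure `dotAB`.  Assume each `A_x = χ_x · A`
admits a bounded approximate unit in the purely algebraic sense stated in `hAU`.  Then,
with `B_x = A_x · B`: `B_x ∩ B_y = 0` for `x ≠ y`, `B = ⊕_x B_x`, and the action
`(∑ λ_x χ_x)·(∑ b_x) = ∑ λ_x b_x` defines a full compatible `(G, ℂ^(G/H))`-structure on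
`B` for which `χ_x` acts as the identity on `B_x`; hence `B` is proper over `G/H`. -/
theorem stmt14 {G : Type*} [Group G] (H : Subgroup G)
    {A : Type*} [NonUnitalCommRing A] [StarRing A] [Module ℂ A]
    {B : Type*} [NonUnitalNormedRing B] [StarRing B] [Module ℂ B]
    (hBcomm : ∀ b b' : B, b * b' = b' * b)
    -- `G`-actions on `A` and `B` by `*`-automorphisms:
    (actA : G → A → A) (actB : G → B → B)
    (hactA_one : ∀ a, actA 1 a = a)
    (hactA_mul : ∀ g g' a, actA g (actA g' a) = actA (g * g') a)
    (hactA_add : ∀ g a b, actA g (a + b) = actA g a + actA g b)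
    (hactA_ring : ∀ g a b, actA g (a * b) = actA g a * actA g b)
    (hactA_star : ∀ g a, actA g (star a) = star (actA g a))
    (hactB_one : ∀ b, actB 1 b = b)
    (hactB_mul : ∀ g g' b, actB g (actB g' b) = actB (g * g') b)
    (hactB_add : ∀ g b b', actB g (b + b') = actB g b + actB g b')
    (hactB_ring : ∀ g b b', actB g (b * b') = actB g b * actB g b')
    (hactB_star : ∀ g b, actB g (star b) = star (actB g b))
    -- the full compatible `(G, ℂ^(G/H))`-structure on `A`:
    (dotJA : ((G ⧸ H) →₀ ℂ) → A → A)
    (hJA_addc : ∀ c c' a, dotJA (c + c') a = dotJA c a + dotJA c' a)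
    (hJA_adda : ∀ c a a', dotJA c (a + a') = dotJA c a + dotJA c a')
    (hJA_mulc : ∀ c c' a, dotJA (c * c') a = dotJA c (dotJA c' a))
    (hJA_mul_left : ∀ c a a', dotJA c (a * a') = dotJA c a * a')
    (hJA_mul_right : ∀ c a a', dotJA c (a * a') = a * dotJA c a')
    (hJA_smul : ∀ (l : ℂ) c a, dotJA (l • c) a = dotJA c (l • a))
    (hJA_equiv : ∀ g c a,
      actA g (dotJA c a) = dotJA (Finsupp.mapDomain (fun x : G ⧸ H => g • x) c) (actA g a))
    (hJA_star : ∀ c a,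
      star (dotJA c a) = dotJA (Finsupp.mapRange (starRingEnd ℂ) (map_zero _) c) (star a))
    (hJA_full : ∀ a : A, a ∈ AddSubgroup.closure {x : A | ∃ c a', x = dotJA c a'})
    -- the full compatible `(G, A)`-structure on `B`:
    (dotAB : A → B → B)
    (hAB_adda : ∀ a a' b, dotAB (a + a') b = dotAB a b + dotAB a' b)
    (hAB_addb : ∀ a b b', dotAB a (b + b') = dotAB a b + dotAB a b')
    (hAB_mula : ∀ a a' b, dotAB (a * a') b = dotAB a (dotAB a' b))
    (hAB_mul_left : ∀ a b b', dotAB a (b * b') = dotAB a b * b')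
    (hAB_mul_right : ∀ a b b', dotAB a (b * b') = b * dotAB a b')
    (hAB_smul : ∀ (l : ℂ) a b, dotAB (l • a) b = dotAB a (l • b))
    (hAB_smul' : ∀ (l : ℂ) a b, dotAB a (l • b) = l • dotAB a b)
    (hAB_equiv : ∀ g a b, actB g (dotAB a b) = dotAB (actA g a) (actB g b))
    (hAB_star : ∀ a b, star (dotAB a b) = dotAB (star a) (star b))
    (hAB_full : ∀ b : B, b ∈ AddSubgroup.closure {y : B | ∃ a b', y = dotAB a b'}) :
    -- with `A_x = χ_x · A` and `B_x = A_x · B`: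
    letI Ax : (G ⧸ H) → Set A := fun x => Set.range (dotJA (Finsupp.single x 1))
    letI Bx : (G ⧸ H) → AddSubgroup B := fun x =>
      AddSubgroup.closure {y : B | ∃ a b', a ∈ Ax x ∧ y = dotAB a b'}
    -- approximate units for the `A_x`:
    (∀ (x : G ⧸ H) (n : ℕ) (a : Fin n → A) (bb : Fin n → B) (b : B),
        (∀ i, a i ∈ Ax x) → b = ∑ i, dotAB (a i) (bb i) →
        ∀ ε > (0 : ℝ), ∃ e ∈ Ax x, ‖dotAB e b - b‖ < ε) →
    -- (1) `B_x ∩ B_y = 0` for `x ≠ y`: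
    (∀ x y : G ⧸ H, x ≠ y → ∀ b : B, b ∈ Bx x → b ∈ Bx y → b = 0) ∧
    -- (2) `B = ⊕_x B_x`:
    (∀ b : B, ∃ (s : Finset (G ⧸ H)) (F : (G ⧸ H) → B),
      (∀ x, F x ∈ Bx x) ∧ b = ∑ x ∈ s, F x) ∧
    (∀ (s : Finset (G ⧸ H)) (F : (G ⧸ H) → B),
      (∀ x, F x ∈ Bx x) → ∑ x ∈ s, F x = 0 → ∀ x ∈ s, F x = 0) ∧
    -- (3) the componentwise action of `ℂ^(G/H)` is a full compatible structure, so `B`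
    -- is proper over `G/H`:
    (∃ dotJB : ((G ⧸ H) →₀ ℂ) → B → B,
      (∀ c c' b, dotJB (c + c') b = dotJB c b + dotJB c' b) ∧
      (∀ c b b', dotJB c (b + b') = dotJB c b + dotJB c b') ∧
      (∀ c c' b, dotJB (c * c') b = dotJB c (dotJB c' b)) ∧
      (∀ c b b', dotJB c (b * b') = dotJB c b * b') ∧
      (∀ c b b', dotJB c (b * b') = b * dotJB c b') ∧
      (∀ (l : ℂ) c b, dotJB (l • c) b = dotJB c (l • b)) ∧
      (∀ g c b, actB g (dotJB c b) =
        dotJB (Finsupp.mapDomain (fun x : G ⧸ H => g • x) c) (actB g b)) ∧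
      (∀ c b, star (dotJB c b) =
        dotJB (Finsupp.mapRange (starRingEnd ℂ) (map_zero _) c) (star b)) ∧
      (∀ b : B, b ∈ AddSubgroup.closure {y : B | ∃ c b', y = dotJB c b'}) ∧
      -- the action is the componentwise one: `χ_x` acts as the identity on `B_x`, and
      -- `χ_y` kills `B_x` for `y ≠ x`:
      (∀ (x : G ⧸ H) (b : B), b ∈ Bx x → dotJB (Finsupp.single x 1) b = b) ∧
      (∀ (x y : G ⧸ H), y ≠ x → ∀ b ∈ Bx x, dotJB (Finsupp.single y 1) b = 0)) := by
  
  classical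
  intro hAU
  -- abbreviations
  let Ax : (G ⧸ H) → Set A := fun x => Set.range (dotJA (Finsupp.single x 1))
  let Bx : (G ⧸ H) → AddSubgroup B := fun x =>
    AddSubgroup.closure {y : B | ∃ a b', a ∈ Ax x ∧ y = dotAB a b'}
  -- basic zero/neg lemmas
  have hJA0c : ∀ a, dotJA 0 a = 0 := by
    intro a; have h := hJA_addc 0 0 a; rw [add_zero] at h; exact (left_eq_add.mp h)
  have hJA0a : ∀ c, dotJA c 0 = 0 := by
    intro c; have h := hJA_adda c 0 0; rw [add_zero] at h; exact (left_eq_add.mp h)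
  have hAB0a : ∀ b, dotAB 0 b = 0 := by
    intro b; have h := hAB_adda 0 0 b; rw [add_zero] at h; exact (left_eq_add.mp h)
  have hAB0b : ∀ a, dotAB a 0 = 0 := by
    intro a; have h := hAB_addb a 0 0; rw [add_zero] at h; exact (left_eq_add.mp h)
  have hABnegb : ∀ a b, dotAB a (-b) = -dotAB a b := by
    intro a b
    have h : dotAB a b + dotAB a (-b) = 0 := by rw [← hAB_addb, add_neg_cancel, hAB0b]
    exact eq_neg_of_add_eq_zero_right h
  have hactB0 : ∀ g, actB g 0 = 0 := by
    intro g; have h := hactB_add g 0 0; rw [add_zero] at h; exact (left_eq_add.mp h)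
  have hactBneg : ∀ g b, actB g (-b) = -actB g b := by
    intro g b
    have h : actB g b + actB g (-b) = 0 := by rw [← hactB_add, add_neg_cancel, hactB0]
    exact eq_neg_of_add_eq_zero_right h
  have hactA0 : ∀ g, actA g 0 = 0 := by
    intro g; have h := hactA_add g 0 0; rw [add_zero] at h; exact (left_eq_add.mp h)
  have hactAneg : ∀ g a, actA g (-a) = -actA g a := by
    intro g a
    have h : actA g a + actA g (-a) = 0 := by rw [← hactA_add, add_neg_cancel, hactA0]
    exact eq_neg_of_add_eq_zero_right h
  -- sum lemmas
  have dotJA_sumc : ∀ (a : A) (s : Finset (G ⧸ H)) (f : (G ⧸ H) → ((G ⧸ H) →₀ ℂ)),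
      dotJA (∑ x ∈ s, f x) a = ∑ x ∈ s, dotJA (f x) a := fun a s f =>
    map_sum (AddMonoidHom.mk' (fun c => dotJA c a) fun c c' => hJA_addc c c' a) f s
  have dotAB_suma : ∀ (w : B) (s : Finset (G ⧸ H)) (f : (G ⧸ H) → A),
      dotAB (∑ y ∈ s, f y) w = ∑ y ∈ s, dotAB (f y) w := fun w s f =>
    map_sum (AddMonoidHom.mk' (fun a => dotAB a w) fun a a' => hAB_adda a a' w) f s
  have dotAB_sumb : ∀ (e : A) (s : Finset (G ⧸ H)) (f : (G ⧸ H) → B),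
      dotAB e (∑ y ∈ s, f y) = ∑ y ∈ s, dotAB e (f y) := fun e s f =>
    map_sum (AddMonoidHom.mk' (fun b => dotAB e b) fun b b' => hAB_addb e b b') f s
  have actB_sum : ∀ (g : G) (s : Finset (G ⧸ H)) (f : (G ⧸ H) → B),
      actB g (∑ y ∈ s, f y) = ∑ y ∈ s, actB g (f y) := fun g s f =>
    map_sum (AddMonoidHom.mk' (actB g) fun b b' => hactB_add g b b') f s
  -- Finsupp computations
  have single_mul : ∀ (y : G ⧸ H) (l : ℂ) (c : (G ⧸ H) →₀ ℂ),
      Finsupp.single y l * c = Finsupp.single y (l * c y) := by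
    intro y l c; ext z
    rw [Finsupp.mul_apply]
    by_cases h : y = z
    · subst h; simp
    · rw [Finsupp.single_eq_of_ne' h, Finsupp.single_eq_of_ne' h, zero_mul]
  have chiI : ∀ x : G ⧸ H, Finsupp.single x (1:ℂ) * Finsupp.single x 1 = Finsupp.single x 1 := by
    intro x; rw [single_mul, Finsupp.single_eq_same, one_mul]
  have chiK : ∀ x y : G ⧸ H, x ≠ y → Finsupp.single x (1:ℂ) * Finsupp.single y 1 = 0 := by
    intro x y h
    rw [single_mul, Finsupp.single_eq_of_ne' (Ne.symm h), mul_zero, Finsupp.single_zero]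
  have smul_chi : ∀ (l : ℂ) (x : G ⧸ H), l • Finsupp.single x (1:ℂ) = Finsupp.single x l := by
    intro l x; rw [Finsupp.smul_single, smul_eq_mul, mul_one]
  -- Ax basics
  have Ax_zero : ∀ x, (0:A) ∈ Ax x := fun x => ⟨0, hJA0a _⟩
  have P_on : ∀ x a, a ∈ Ax x → dotJA (Finsupp.single x 1) a = a := by
    rintro x a ⟨u, rfl⟩; rw [← hJA_mulc, chiI]
  have P_kill : ∀ x y, x ≠ y → ∀ a ∈ Ax y, dotJA (Finsupp.single x 1) a = 0 := by
    rintro x y hxy a ⟨u, rfl⟩; rw [← hJA_mulc, chiK x y hxy, hJA0c]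
  -- decomposition of elements of A
  have decompA : ∀ a : A, ∃ T : Finset (G ⧸ H),
      (∀ y ∉ T, dotJA (Finsupp.single y 1) a = 0) ∧
      a = ∑ y ∈ T, dotJA (Finsupp.single y 1) a := by
    intro a
    induction (hJA_full a) using AddSubgroup.closure_induction with
    | mem w hw =>
      obtain ⟨c, u, rfl⟩ := hw
      have key : ∀ y : G ⧸ H, dotJA (Finsupp.single y 1) (dotJA c u)
          = dotJA (Finsupp.single y (c y)) u := by
        intro y; rw [← hJA_mulc, single_mul, one_mul]
      refine ⟨c.support, ?_, ?_⟩
      · intro y hy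
        rw [key y, Finsupp.notMem_support_iff.mp hy, Finsupp.single_zero, hJA0c]
      · have hc : ∑ y ∈ c.support, Finsupp.single y (c y) = c := Finsupp.sum_single c
        calc dotJA c u = dotJA (∑ y ∈ c.support, Finsupp.single y (c y)) u := by rw [hc]
          _ = ∑ y ∈ c.support, dotJA (Finsupp.single y (c y)) u := dotJA_sumc u _ _
          _ = ∑ y ∈ c.support, dotJA (Finsupp.single y 1) (dotJA c u) := by
              refine Finset.sum_congr rfl fun y _ => (key y).symm
    | zero => exact ⟨∅, fun y _ => hJA0a _, by simp⟩
    | add u v _ _ hu hv =>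
      obtain ⟨T, h0, h1⟩ := hu; obtain ⟨T', h0', h1'⟩ := hv
      refine ⟨T ∪ T', ?_, ?_⟩
      · intro y hy
        rw [hJA_adda, h0 y fun h => hy (Finset.mem_union_left _ h),
          h0' y fun h => hy (Finset.mem_union_right _ h), add_zero]
      · calc u + v = ∑ y ∈ T ∪ T', dotJA (Finsupp.single y 1) u
              + ∑ y ∈ T ∪ T', dotJA (Finsupp.single y 1) v := by
              rw [← Finset.sum_subset Finset.subset_union_left (fun y _ hy => h0 y hy),
                ← Finset.sum_subset Finset.subset_union_right (fun y _ hy => h0' y hy),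
                ← h1, ← h1']
          _ = ∑ y ∈ T ∪ T', dotJA (Finsupp.single y 1) (u + v) := by
              rw [← Finset.sum_add_distrib]
              exact Finset.sum_congr rfl fun y _ => (hJA_adda _ u v).symm
    | neg u _ hu =>
      obtain ⟨T, h0, h1⟩ := hu
      have hneg : ∀ c a, dotJA c (-a) = -dotJA c a := by
        intro c a
        have h : dotJA c a + dotJA c (-a) = 0 := by rw [← hJA_adda, add_neg_cancel, hJA0a]
        exact eq_neg_of_add_eq_zero_right h
      refine ⟨T, fun y hy => by rw [hneg, h0 y hy, neg_zero], ?_⟩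
      calc -u = -∑ y ∈ T, dotJA (Finsupp.single y 1) u := by rw [← h1]
        _ = ∑ y ∈ T, dotJA (Finsupp.single y 1) (-u) := by
            rw [← Finset.sum_neg_distrib]
            exact Finset.sum_congr rfl fun y _ => (hneg _ u).symm
  -- the key `ℂ`-linearity of dotJA in its second argument
  have JS : ∀ (l : ℂ) (c : (G ⧸ H) →₀ ℂ) (u : A), l • dotJA c u = dotJA c (l • u) := by
    intro l c u
    have comp : ∀ y : G ⧸ H, dotJA (Finsupp.single y 1) (l • dotJA c u)
        = dotJA (Finsupp.single y 1) (dotJA c (l • u)) := by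
      intro y
      have h1 : dotJA (Finsupp.single y 1) (l • dotJA c u)
          = dotJA (Finsupp.single y 1) ((l * c y) • u) := by
        rw [← hJA_smul, smul_chi, ← hJA_mulc, single_mul, ← smul_chi (l * c y) y, hJA_smul]
      have h2 : dotJA (Finsupp.single y 1) (dotJA c (l • u))
          = dotJA (Finsupp.single y 1) ((c y) • (l • u)) := by
        rw [← hJA_mulc, single_mul, one_mul, ← smul_chi (c y) y, hJA_smul]
      rw [h1, h2, smul_smul, mul_comm l (c y)]
    obtain ⟨T, h0, h1⟩ := decompA (l • dotJA c u)
    obtain ⟨T', h0', h1'⟩ := decompA (dotJA c (l • u))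
    calc l • dotJA c u = ∑ y ∈ T, dotJA (Finsupp.single y 1) (l • dotJA c u) := h1
      _ = ∑ y ∈ T ∪ T', dotJA (Finsupp.single y 1) (l • dotJA c u) :=
          Finset.sum_subset Finset.subset_union_left (fun y _ hy => h0 y hy)
      _ = ∑ y ∈ T ∪ T', dotJA (Finsupp.single y 1) (dotJA c (l • u)) :=
          Finset.sum_congr rfl fun y _ => comp y
      _ = ∑ y ∈ T', dotJA (Finsupp.single y 1) (dotJA c (l • u)) :=
          (Finset.sum_subset Finset.subset_union_right (fun y _ hy => h0' y hy)).symm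
      _ = dotJA c (l • u) := h1'.symm
  -- ℂ-linearity of the actions
  have LACTA : ∀ (g : G) (l : ℂ) (a : A), actA g (l • a) = l • actA g a := by
    intro g l a
    induction (hJA_full a) using AddSubgroup.closure_induction with
    | mem w hw =>
      obtain ⟨c, u, rfl⟩ := hw
      rw [JS, ← hJA_smul, hJA_equiv, Finsupp.mapDomain_smul, hJA_smul, ← JS, ← hJA_equiv]
    | zero => rw [smul_zero, hactA0, smul_zero]
    | add u v _ _ hu hv => rw [smul_add, hactA_add, hactA_add, hu, hv, smul_add]
    | neg u _ hu => rw [smul_neg, hactAneg, hactAneg, hu, smul_neg]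
  have SJSA : ∀ (l : ℂ) (a : A), star (l • a) = (starRingEnd ℂ l) • star a := by
    intro l a
    have hmr : ∀ (l : ℂ) (c : (G ⧸ H) →₀ ℂ),
        Finsupp.mapRange (starRingEnd ℂ) (map_zero _) (l • c)
          = (starRingEnd ℂ l) • Finsupp.mapRange (starRingEnd ℂ) (map_zero _) c := by
      intro l c; ext z
      simp [Finsupp.mapRange_apply, Finsupp.smul_apply, smul_eq_mul, map_mul]
    induction (hJA_full a) using AddSubgroup.closure_induction with
    | mem w hw =>
      obtain ⟨c, u, rfl⟩ := hw
      rw [JS, ← hJA_smul, hJA_star, hmr, hJA_smul, ← JS, ← hJA_star]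
    | zero => rw [smul_zero, star_zero, smul_zero]
    | add u v _ _ hu hv => rw [smul_add, star_add, star_add, hu, hv, smul_add]
    | neg u _ hu => rw [smul_neg, star_neg, star_neg, hu, smul_neg]
  have smulAB : ∀ (l : ℂ) (a : A) (b : B), dotAB (l • a) b = l • dotAB a b := by
    intro l a b; rw [hAB_smul, hAB_smul']
  have LACTB : ∀ (g : G) (l : ℂ) (v : B), actB g (l • v) = l • actB g v := by
    intro g l v
    induction (hAB_full v) using AddSubgroup.closure_induction with
    | mem w hw =>
      obtain ⟨a, w', rfl⟩ := hw
      rw [← hAB_smul', ← hAB_smul, hAB_equiv, LACTA, smulAB, ← hAB_equiv]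
    | zero => rw [smul_zero, hactB0, smul_zero]
    | add u v _ _ hu hv => rw [smul_add, hactB_add, hactB_add, hu, hv, smul_add]
    | neg u _ hu => rw [smul_neg, hactBneg, hactBneg, hu, smul_neg]
  have SJSB : ∀ (l : ℂ) (v : B), star (l • v) = (starRingEnd ℂ l) • star v := by
    intro l v
    induction (hAB_full v) using AddSubgroup.closure_induction with
    | mem w hw =>
      obtain ⟨a, w', rfl⟩ := hw
      rw [← hAB_smul', ← hAB_smul, hAB_star, SJSA, smulAB, ← hAB_star]
    | zero => rw [smul_zero, star_zero, smul_zero]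
    | add u v _ _ hu hv => rw [smul_add, star_add, star_add, hu, hv, smul_add]
    | neg u _ hu => rw [smul_neg, star_neg, star_neg, hu, smul_neg]
  have SMAB : ∀ (l : ℂ) (u v : B), (l • u) * v = l • (u * v) := by
    intro l u v
    induction (hAB_full u) using AddSubgroup.closure_induction with
    | mem w hw =>
      obtain ⟨a, w', rfl⟩ := hw
      rw [← smulAB, ← hAB_mul_left, smulAB, hAB_mul_left]
    | zero => rw [smul_zero, zero_mul, smul_zero]
    | add u' v' _ _ hu hv => rw [smul_add, add_mul, add_mul, hu, hv, smul_add]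
    | neg u' _ hu => rw [smul_neg, neg_mul, neg_mul, hu, smul_neg]
  -- closure properties of Ax
  have AxSmul : ∀ (x) (l : ℂ) (a), a ∈ Ax x → l • a ∈ Ax x := by
    rintro x l a ⟨u, rfl⟩; exact ⟨l • u, (JS l _ u).symm⟩
  have AxStar : ∀ (x) (a), a ∈ Ax x → star a ∈ Ax x := by
    rintro x a ⟨u, rfl⟩
    refine ⟨star u, ?_⟩
    rw [hJA_star, Finsupp.mapRange_single, map_one]
  have AxAct : ∀ (g : G) (x) (a), a ∈ Ax x → actA g a ∈ Ax (g • x) := by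
    rintro g x a ⟨u, rfl⟩
    refine ⟨actA g u, ?_⟩
    rw [hJA_equiv, Finsupp.mapDomain_single]
  -- closure properties of Bx
  have BxSmul : ∀ (x) (l : ℂ) (v : B), v ∈ Bx x → l • v ∈ Bx x := by
    intro x l v hv
    induction hv using AddSubgroup.closure_induction with
    | mem w hw =>
      obtain ⟨a, b', ha, rfl⟩ := hw
      exact AddSubgroup.subset_closure ⟨a, l • b', ha, (hAB_smul' l a b').symm⟩
    | zero => rw [smul_zero]; exact zero_mem _
    | add u v _ _ hu hv => rw [smul_add]; exact add_mem hu hv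
    | neg u _ hu => rw [smul_neg]; exact neg_mem hu
  have BxMulR : ∀ (x) (v : B), v ∈ Bx x → ∀ w : B, v * w ∈ Bx x := by
    intro x v hv
    induction hv using AddSubgroup.closure_induction with
    | mem w hw =>
      obtain ⟨a, b', ha, rfl⟩ := hw
      exact fun w => AddSubgroup.subset_closure ⟨a, b' * w, ha, (hAB_mul_left a b' w).symm⟩
    | zero => intro w; rw [zero_mul]; exact zero_mem _
    | add u v _ _ hu hv => intro w; rw [add_mul]; exact add_mem (hu w) (hv w)
    | neg u _ hu => intro w; rw [neg_mul]; exact neg_mem (hu w)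
  have BxStar : ∀ (x) (v : B), v ∈ Bx x → star v ∈ Bx x := by
    intro x v hv
    induction hv using AddSubgroup.closure_induction with
    | mem w hw =>
      obtain ⟨a, b', ha, rfl⟩ := hw
      exact AddSubgroup.subset_closure ⟨star a, star b', AxStar x a ha, hAB_star a b'⟩
    | zero => rw [star_zero]; exact zero_mem _
    | add u v _ _ hu hv => rw [star_add]; exact add_mem hu hv
    | neg u _ hu => rw [star_neg]; exact neg_mem hu
  have BxAct : ∀ (g : G) (x) (v : B), v ∈ Bx x → actB g v ∈ Bx (g • x) := by
    intro g x v hv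
    induction hv using AddSubgroup.closure_induction with
    | mem w hw =>
      obtain ⟨a, b', ha, rfl⟩ := hw
      exact AddSubgroup.subset_closure ⟨actA g a, actB g b', AxAct g x a ha, hAB_equiv g a b'⟩
    | zero => rw [hactB0]; exact zero_mem _
    | add u v _ _ hu hv => rw [hactB_add]; exact add_mem hu hv
    | neg u _ hu => rw [hactBneg]; exact neg_mem hu
  -- elements of Ax x kill Bx y for x ≠ y
  have KL : ∀ (x y : G ⧸ H), x ≠ y → ∀ e ∈ Ax x, ∀ v ∈ Bx y, dotAB e v = 0 := by
    intro x y hxy e he v hv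
    induction hv using AddSubgroup.closure_induction with
    | mem w hw =>
      obtain ⟨a, b', ha, rfl⟩ := hw
      obtain ⟨u, rfl⟩ := he
      obtain ⟨u', rfl⟩ := ha
      have : dotJA (Finsupp.single x 1) u * dotJA (Finsupp.single y 1) u' = 0 := by
        rw [← hJA_mul_left, ← hJA_mul_right, ← hJA_mulc, chiK x y hxy, hJA0c]
      rw [← hAB_mula, this, hAB0a]
    | zero => exact hAB0b _
    | add u v _ _ hu hv => rw [hAB_addb, hu, hv, add_zero]
    | neg u _ hu => rw [hABnegb, hu, neg_zero]
  -- representation of elements of Bx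
  have RepBx : ∀ (x) (v : B), v ∈ Bx x → ∃ (n : ℕ) (aa : Fin n → A) (bb : Fin n → B),
      (∀ i, aa i ∈ Ax x) ∧ v = ∑ i, dotAB (aa i) (bb i) := by
    intro x v hv
    induction hv using AddSubgroup.closure_induction with
    | mem w hw =>
      obtain ⟨a, b', ha, rfl⟩ := hw
      exact ⟨1, fun _ => a, fun _ => b', fun _ => ha, by simp⟩
    | zero => exact ⟨0, fun i => 0, fun i => 0, fun i => i.elim0, by simp⟩
    | add u v _ _ hu hv =>
      obtain ⟨n, aa, bb, ha, hrep⟩ := hu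
      obtain ⟨m, aa', bb', ha', hrep'⟩ := hv
      refine ⟨n + m, Fin.append aa aa', Fin.append bb bb', ?_, ?_⟩
      · intro i
        refine Fin.addCases (fun j => ?_) (fun j => ?_) i
        · rw [Fin.append_left]; exact ha j
        · rw [Fin.append_right]; exact ha' j
      · rw [Fin.sum_univ_add]
        simp only [Fin.append_left, Fin.append_right]
        rw [← hrep, ← hrep']
    | neg u _ hu =>
      obtain ⟨n, aa, bb, ha, hrep⟩ := hu
      refine ⟨n, aa, fun i => -(bb i), ha, ?_⟩
      simp only [hABnegb]
      rw [Finset.sum_neg_distrib, ← hrep]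
  -- approximate units
  have AUB : ∀ (x) (v : B), v ∈ Bx x → ∀ ε > (0:ℝ), ∃ e ∈ Ax x, ‖dotAB e v - v‖ < ε := by
    intro x v hv ε hε
    obtain ⟨n, aa, bb, ha, hrep⟩ := RepBx x v hv
    exact hAU x n aa bb v ha hrep ε hε
  have ZeroAnn : ∀ (x) (v : B), v ∈ Bx x → (∀ e ∈ Ax x, dotAB e v = 0) → v = 0 := by
    intro x v hv hann
    by_contra h0
    obtain ⟨e, he, hlt⟩ := AUB x v hv ‖v‖ (norm_pos_iff.mpr h0)
    rw [hann e he, zero_sub, norm_neg] at hlt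
    exact lt_irrefl _ hlt
  -- uniqueness of decompositions
  have hUniq0 : ∀ (s : Finset (G ⧸ H)) (F : (G ⧸ H) → B), (∀ x, F x ∈ Bx x) →
      ∑ x ∈ s, F x = 0 → ∀ x ∈ s, F x = 0 := by
    intro s F hF hsum x hx
    refine ZeroAnn x (F x) (hF x) ?_
    intro e he
    have h1 : ∑ y ∈ s, dotAB e (F y) = 0 := by rw [← dotAB_sumb, hsum, hAB0b]
    have h2 : dotAB e (F x) + ∑ y ∈ s.erase x, dotAB e (F y) = ∑ y ∈ s, dotAB e (F y) :=
      Finset.add_sum_erase s (fun y => dotAB e (F y)) hx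
    have h3 : ∑ y ∈ s.erase x, dotAB e (F y) = 0 :=
      Finset.sum_eq_zero fun y hy =>
        KL x y (Ne.symm (Finset.ne_of_mem_erase hy)) e he (F y) (hF y)
    rw [h3, add_zero, h1] at h2
    exact h2
  -- existence of decompositions
  have hDexists : ∀ b : B, ∃ s : Finset (G ⧸ H), ∃ F : (G ⧸ H) → B,
      (∀ x, F x ∈ Bx x) ∧ (∀ x ∉ s, F x = 0) ∧ b = ∑ x ∈ s, F x := by
    let D : AddSubgroup B :=
      { carrier := {b | ∃ s : Finset (G ⧸ H), ∃ F : (G ⧸ H) → B,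
          (∀ x, F x ∈ Bx x) ∧ (∀ x ∉ s, F x = 0) ∧ b = ∑ x ∈ s, F x}
        zero_mem' := ⟨∅, fun _ => 0, fun x => zero_mem _, fun _ _ => rfl, by simp⟩
        add_mem' := by
          rintro u v ⟨s, F, h1, h2, rfl⟩ ⟨s', F', h1', h2', rfl⟩
          refine ⟨s ∪ s', fun x => F x + F' x, fun x => add_mem (h1 x) (h1' x), ?_, ?_⟩
          · intro x hx
            simp only [h2 x fun h => hx (Finset.mem_union_left _ h),
              h2' x fun h => hx (Finset.mem_union_right _ h), add_zero]
          · rw [Finset.sum_add_distrib,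
              ← Finset.sum_subset Finset.subset_union_left (fun x _ hx => h2 x hx),
              ← Finset.sum_subset Finset.subset_union_right (fun x _ hx => h2' x hx)]
        neg_mem' := by
          rintro u ⟨s, F, h1, h2, rfl⟩
          exact ⟨s, fun x => -F x, fun x => neg_mem (h1 x),
            fun x hx => by simp only [h2 x hx, neg_zero], by rw [Finset.sum_neg_distrib]⟩ }
    have hone : ∀ (y : G ⧸ H) (v : B), v ∈ Bx y → v ∈ D := by
      intro y v hv
      refine ⟨{y}, fun z => if z = y then v else 0, ?_, ?_, ?_⟩
      · intro z
        by_cases h : z = y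
        · subst h; simpa using hv
        · simp only [if_neg h]; exact zero_mem _
      · intro z hz; simp only [if_neg (show z ≠ y by simpa using hz)]
      · simp
    have hgen : ∀ (a : A) (w : B), dotAB a w ∈ D := by
      intro a w
      obtain ⟨T, hT0, hTrep⟩ := decompA a
      have heq : dotAB a w = ∑ y ∈ T, dotAB (dotJA (Finsupp.single y 1) a) w := by
        conv_lhs => rw [hTrep]
        exact dotAB_suma w T _
      rw [heq]
      exact sum_mem fun y _ => hone y _
        (AddSubgroup.subset_closure ⟨dotJA (Finsupp.single y 1) a, w, ⟨a, rfl⟩, rfl⟩)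
    intro b
    have hb : b ∈ D := by
      induction (hAB_full b) using AddSubgroup.closure_induction with
      | mem w hw => obtain ⟨a, w', rfl⟩ := hw; exact hgen a w'
      | zero => exact zero_mem D
      | add u v _ _ hu hv => exact add_mem hu hv
      | neg u _ hu => exact neg_mem hu
    exact hb
  choose sD FD hF1 hF2 hF3 using hDexists
  have UL : ∀ (b : B) (s : Finset (G ⧸ H)) (F : (G ⧸ H) → B), (∀ x, F x ∈ Bx x) →
      (∀ x ∉ s, F x = 0) → b = ∑ x ∈ s, F x → ∀ x, F x = FD b x := by
    intro b s F hF h0 hrep x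
    have hsum : ∑ y ∈ s ∪ sD b, (F y - FD b y) = 0 := by
      rw [Finset.sum_sub_distrib,
        ← Finset.sum_subset Finset.subset_union_left (fun y _ hy => h0 y hy),
        ← Finset.sum_subset Finset.subset_union_right (fun y _ hy => hF2 b y hy),
        ← hrep, ← hF3 b, sub_self]
    by_cases hx : x ∈ s ∪ sD b
    · have := hUniq0 (s ∪ sD b) (fun y => F y - FD b y)
        (fun y => sub_mem (hF y) (hF1 b y)) hsum x hx
      exact sub_eq_zero.mp this
    · rw [h0 x fun h => hx (Finset.mem_union_left _ h),
        hF2 b x fun h => hx (Finset.mem_union_right _ h)]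
  -- the componentwise action on B
  let dotJB : ((G ⧸ H) →₀ ℂ) → B → B := fun c b => ∑ x ∈ sD b, c x • FD b x
  have EXT : ∀ (c : (G ⧸ H) →₀ ℂ) (b : B) (t : Finset (G ⧸ H)), sD b ⊆ t →
      dotJB c b = ∑ x ∈ t, c x • FD b x := fun c b t ht =>
    Finset.sum_subset ht fun x _ hx => by rw [hF2 b x hx, smul_zero]
  have JBsingle : ∀ (x : G ⧸ H) (l : ℂ) (b : B),
      dotJB (Finsupp.single x l) b = l • FD b x := by
    intro x l b
    rw [EXT _ b (sD b ∪ {x}) Finset.subset_union_left,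
      Finset.sum_eq_single x
        (fun y _ hyx => by rw [Finsupp.single_eq_of_ne' (Ne.symm hyx), zero_smul])
        (fun hx => absurd (Finset.mem_union_right _ (Finset.mem_singleton_self x)) hx),
      Finsupp.single_eq_same]
  -- computation of components
  have cpAdd : ∀ (b b' : B) (x), FD (b + b') x = FD b x + FD b' x := by
    intro b b' x
    refine (UL (b + b') (sD b ∪ sD b') (fun y => FD b y + FD b' y)
      (fun y => add_mem (hF1 b y) (hF1 b' y)) ?_ ?_ x).symm
    · intro y hy
      simp only [hF2 b y fun h => hy (Finset.mem_union_left _ h),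
        hF2 b' y fun h => hy (Finset.mem_union_right _ h), add_zero]
    · rw [Finset.sum_add_distrib,
        ← Finset.sum_subset Finset.subset_union_left (fun y _ hy => hF2 b y hy),
        ← Finset.sum_subset Finset.subset_union_right (fun y _ hy => hF2 b' y hy),
        ← hF3 b, ← hF3 b']
  have cpSmul : ∀ (l : ℂ) (b : B) (x), FD (l • b) x = l • FD b x := by
    intro l b x
    refine (UL (l • b) (sD b) (fun y => l • FD b y)
      (fun y => BxSmul y l _ (hF1 b y)) (fun y hy => by simp only [hF2 b y hy, smul_zero]) ?_ x).symm
    rw [← Finset.smul_sum, ← hF3 b]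
  have cpMul : ∀ (b b' : B) (x), FD (b * b') x = FD b x * b' := by
    intro b b' x
    refine (UL (b * b') (sD b) (fun y => FD b y * b')
      (fun y => BxMulR y _ (hF1 b y) b') (fun y hy => by simp only [hF2 b y hy, zero_mul]) ?_ x).symm
    rw [← Finset.sum_mul, ← hF3 b]
  have cpStar : ∀ (b : B) (x), FD (star b) x = star (FD b x) := by
    intro b x
    refine (UL (star b) (sD b) (fun y => star (FD b y))
      (fun y => BxStar y _ (hF1 b y)) (fun y hy => by simp only [hF2 b y hy, star_zero]) ?_ x).symm
    rw [← star_sum, ← hF3 b]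
  have cpJB : ∀ (c : (G ⧸ H) →₀ ℂ) (b : B) (x), FD (dotJB c b) x = c x • FD b x := by
    intro c b x
    exact (UL (dotJB c b) (sD b) (fun y => c y • FD b y)
      (fun y => BxSmul y _ _ (hF1 b y)) (fun y hy => by simp only [hF2 b y hy, smul_zero]) rfl x).symm
  have cpAct : ∀ (g : G) (b : B) (x), FD (actB g b) x = actB g (FD b (g⁻¹ • x)) := by
    intro g b x
    refine (UL (actB g b) ((sD b).image (fun z => g • z))
      (fun y => actB g (FD b (g⁻¹ • y))) ?_ ?_ ?_ x).symm
    · intro y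
      have h := BxAct g (g⁻¹ • y) _ (hF1 b (g⁻¹ • y))
      rwa [smul_inv_smul] at h
    · intro y hy
      have hnotin : g⁻¹ • y ∉ sD b := by
        intro h
        have h2 : g • (g⁻¹ • y) ∈ (sD b).image (fun z => g • z) :=
          Finset.mem_image_of_mem _ h
        rw [smul_inv_smul] at h2
        exact hy h2
      simp only [hF2 b _ hnotin, hactB0]
    · rw [Finset.sum_image (fun z _ z' _ h => MulAction.injective g h)]
      have hterm : ∀ z ∈ sD b, actB g (FD b (g⁻¹ • (g • z))) = actB g (FD b z) := by
        intro z _; rw [inv_smul_smul]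
      rw [Finset.sum_congr rfl hterm, ← actB_sum, ← hF3 b]
  -- the eleven properties of dotJB
  have JBaddc : ∀ c c' b, dotJB (c + c') b = dotJB c b + dotJB c' b := by
    intro c c' b
    calc dotJB (c + c') b = ∑ x ∈ sD b, (c x • FD b x + c' x • FD b x) :=
        Finset.sum_congr rfl fun x _ => by rw [Finsupp.add_apply, add_smul]
      _ = dotJB c b + dotJB c' b := Finset.sum_add_distrib
  have JBaddb : ∀ c b b', dotJB c (b + b') = dotJB c b + dotJB c b' := by
    intro c b b'
    have ht1 : sD (b + b') ⊆ sD (b + b') ∪ sD b ∪ sD b' :=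
      Finset.Subset.trans Finset.subset_union_left Finset.subset_union_left
    have ht2 : sD b ⊆ sD (b + b') ∪ sD b ∪ sD b' :=
      Finset.Subset.trans Finset.subset_union_right Finset.subset_union_left
    have ht3 : sD b' ⊆ sD (b + b') ∪ sD b ∪ sD b' := Finset.subset_union_right
    rw [EXT c (b + b') _ ht1, EXT c b _ ht2, EXT c b' _ ht3, ← Finset.sum_add_distrib]
    exact Finset.sum_congr rfl fun x _ => by rw [cpAdd, smul_add]
  have JBmulc : ∀ c c' b, dotJB (c * c') b = dotJB c (dotJB c' b) := by
    intro c c' b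
    rw [EXT (c * c') b (sD (dotJB c' b) ∪ sD b) Finset.subset_union_right,
      EXT c (dotJB c' b) (sD (dotJB c' b) ∪ sD b) Finset.subset_union_left]
    refine Finset.sum_congr rfl fun x _ => ?_
    rw [cpJB, Finsupp.mul_apply, mul_smul]
  have JBmull : ∀ c b b', dotJB c (b * b') = dotJB c b * b' := by
    intro c b b'
    rw [EXT c (b * b') (sD (b * b') ∪ sD b) Finset.subset_union_left,
      EXT c b (sD (b * b') ∪ sD b) Finset.subset_union_right, Finset.sum_mul]
    refine Finset.sum_congr rfl fun x _ => ?_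
    rw [cpMul, SMAB]
  have JBmulr : ∀ c b b', dotJB c (b * b') = b * dotJB c b' := by
    intro c b b'
    rw [hBcomm b b', JBmull c b' b, hBcomm]
  have JBsmul : ∀ (l : ℂ) c b, dotJB (l • c) b = dotJB c (l • b) := by
    intro l c b
    rw [EXT (l • c) b (sD (l • b) ∪ sD b) Finset.subset_union_right,
      EXT c (l • b) (sD (l • b) ∪ sD b) Finset.subset_union_left]
    refine Finset.sum_congr rfl fun x _ => ?_
    rw [cpSmul, Finsupp.smul_apply, smul_eq_mul, smul_smul, mul_comm l (c x)]
  have JBequiv : ∀ g c b, actB g (dotJB c b) =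
      dotJB (Finsupp.mapDomain (fun x : G ⧸ H => g • x) c) (actB g b) := by
    intro g c b
    have hsub : sD (actB g b) ⊆
        (sD b ∪ (sD (actB g b)).image (fun z => g⁻¹ • z)).image (fun z => g • z) := by
      intro y hy
      have h1 : g⁻¹ • y ∈ sD b ∪ (sD (actB g b)).image (fun z => g⁻¹ • z) :=
        Finset.mem_union_right _ (Finset.mem_image_of_mem _ hy)
      have h2 : g • (g⁻¹ • y) ∈
          (sD b ∪ (sD (actB g b)).image (fun z => g⁻¹ • z)).image (fun z => g • z) :=
        Finset.mem_image_of_mem _ h1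
      rwa [smul_inv_smul] at h2
    rw [EXT _ (actB g b) _ hsub,
      Finset.sum_image (fun z _ z' _ h => MulAction.injective g h)]
    have hterm : ∀ z ∈ sD b ∪ (sD (actB g b)).image (fun z => g⁻¹ • z),
        Finsupp.mapDomain (fun x : G ⧸ H => g • x) c (g • z) • FD (actB g b) (g • z)
          = c z • actB g (FD b z) := by
      intro z _
      rw [cpAct, inv_smul_smul]
      simp only [Finsupp.mapDomain_apply (MulAction.injective g)]
    rw [Finset.sum_congr rfl hterm]
    have hL : actB g (dotJB c b) = ∑ z ∈ sD b, c z • actB g (FD b z) := by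
      rw [show dotJB c b = ∑ x ∈ sD b, c x • FD b x from rfl, actB_sum]
      exact Finset.sum_congr rfl fun z _ => LACTB g (c z) _
    rw [hL]
    exact Finset.sum_subset Finset.subset_union_left fun z _ hz => by
      rw [hF2 b z hz, hactB0, smul_zero]
  have JBstar : ∀ c b, star (dotJB c b) =
      dotJB (Finsupp.mapRange (starRingEnd ℂ) (map_zero _) c) (star b) := by
    intro c b
    have ht1 : sD b ⊆ sD (star b) ∪ sD b := Finset.subset_union_right
    have hL : star (dotJB c b) = ∑ x ∈ sD b, (starRingEnd ℂ) (c x) • star (FD b x) := by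
      rw [show dotJB c b = ∑ x ∈ sD b, c x • FD b x from rfl, star_sum]
      exact Finset.sum_congr rfl fun x _ => SJSB (c x) _
    rw [hL, Finset.sum_subset ht1 (fun x _ hx => by rw [hF2 b x hx, star_zero, smul_zero]),
      EXT _ (star b) _ Finset.subset_union_left]
    refine Finset.sum_congr rfl fun x _ => ?_
    rw [Finsupp.mapRange_apply, cpStar]
  have JBfull : ∀ b : B, b ∈ AddSubgroup.closure {y : B | ∃ c b', y = dotJB c b'} := by
    intro b
    have hrep : b = ∑ x ∈ sD b, dotJB (Finsupp.single x 1) b := by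
      conv_lhs => rw [hF3 b]
      exact Finset.sum_congr rfl fun x _ => by rw [JBsingle, one_smul]
    rw [hrep]
    exact sum_mem fun x _ => AddSubgroup.subset_closure ⟨Finsupp.single x 1, b, rfl⟩
  have cpOfBx : ∀ (x : G ⧸ H) (b : B), b ∈ Bx x →
      ∀ z, (if z = x then b else 0) = FD b z := by
    intro x b hb
    refine UL b {x} (fun z => if z = x then b else 0) ?_ ?_ ?_
    · intro z
      by_cases h : z = x
      · subst h; simpa using hb
      · simp only [if_neg h]; exact zero_mem _
    · intro z hz; simp only [if_neg (show z ≠ x by simpa using hz)]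
    · simp
  have JBid : ∀ (x : G ⧸ H) (b : B), b ∈ Bx x → dotJB (Finsupp.single x 1) b = b := by
    intro x b hb
    rw [JBsingle, one_smul, ← cpOfBx x b hb x, if_pos rfl]
  have JBkill : ∀ (x y : G ⧸ H), y ≠ x → ∀ b ∈ Bx x, dotJB (Finsupp.single y 1) b = 0 := by
    intro x y hyx b hb
    rw [JBsingle, one_smul, ← cpOfBx x b hb y, if_neg hyx]
  -- assemble
  refine ⟨?_, ?_, ?_, dotJB, JBaddc, JBaddb, JBmulc, JBmull, JBmulr, JBsmul, JBequiv,
    JBstar, JBfull, JBid, JBkill⟩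
  · intro x y hxy b hbx hby
    exact ZeroAnn x b hbx fun e he => KL x y hxy e he b hby
  · intro b
    exact ⟨sD b, FD b, hF1 b, hF3 b⟩
  · exact hUniq0
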